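/- Let L ≥ 1, β > 0, and let γ_1 ≥ γ_2 ≥ … ≥ γ_L > 0. Let β_j ≥ 0 and p_j ≥ 0 for j = 1,…,L, with β_j · p_j > 0 for at least one j. Define R(ρ) := Σ_{j=1}^L β_j · log(1 + p_j · f(γ_j,β,ρ)) for ρ > 0. Then R is strictly increasing on the interval (0, β/γ_1) and strictly decreasing on the interval (β/γ_L, ∞). -/

import Mathlib

/-- The deterministic equivalent `g(β,ρ)`: the unique positive solution of
`g·(ρ + β/(1+g)) = 1`, given in closed form. -/
noncomputable def gfun (β ρ : ℝ) : ℝ :=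
  ((1 - ρ - β) + Real.sqrt ((ρ + β - 1) ^ 2 + 4 * ρ)) / (2 * ρ)

/-- The limiting SINR coefficient `f(γ,β,ρ)` at effective SNR γ. -/
noncomputable def ffun (γ β ρ : ℝ) : ℝ :=
  gfun β ρ * (γ + (γ * ρ / β) * (1 + gfun β ρ) ^ 2) / (γ + (1 + gfun β ρ) ^ 2)

lemma gfun_spec {β ρ : ℝ} (hβ : 0 < β) (hρ : 0 < ρ) :
    0 < gfun β ρ ∧
      ρ * gfun β ρ * (1 + gfun β ρ) + β * gfun β ρ = 1 + gfun β ρ := by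
  have hnn : (0:ℝ) ≤ (ρ + β - 1) ^ 2 + 4 * ρ := by positivity
  set s := Real.sqrt ((ρ + β - 1) ^ 2 + 4 * ρ) with hsdef
  have hs0 : 0 ≤ s := Real.sqrt_nonneg _
  have hs2 : s ^ 2 = (ρ + β - 1) ^ 2 + 4 * ρ := Real.sq_sqrt hnn
  have hsgt : ρ + β - 1 < s := by nlinarith
  have hg : gfun β ρ = (1 - ρ - β + s) / (2 * ρ) := by rw [gfun]
  constructor
  · rw [hg]; apply div_pos (by linarith) (by linarith)
  · rw [hg]; field_simp; linear_combination hs2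

/-- strict antitonicity of g -/
lemma gfun_lt {β ρ₁ ρ₂ : ℝ} (hβ : 0 < β) (h1 : 0 < ρ₁) (h12 : ρ₁ < ρ₂) :
    gfun β ρ₂ < gfun β ρ₁ := by
  obtain ⟨hp1, he1⟩ := gfun_spec hβ h1
  obtain ⟨hp2, he2⟩ := gfun_spec hβ (h1.trans h12)
  set g₁ := gfun β ρ₁
  set g₂ := gfun β ρ₂
  by_contra hle
  push_neg at hle
  have key : (1+g₁)*(1+g₂)*(ρ₂*g₂-ρ₁*g₁) + β*(g₂-g₁) = 0 := by
    linear_combination (1+g₁)*he2 - (1+g₂)*he1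
  nlinarith [mul_pos (mul_pos (by linarith : (0:ℝ) < 1+g₁) (by linarith : (0:ℝ) < 1+g₂))
    (by nlinarith : (0:ℝ) < ρ₂*g₂-ρ₁*g₁), mul_nonneg hβ.le (sub_nonneg.2 hle)]

/-- closed form of f in terms of g -/
lemma ffun_eq {γ β ρ : ℝ} (hγ : 0 < γ) (hβ : 0 < β) (hρ : 0 < ρ) :
    ffun γ β ρ = γ * ((1 + gfun β ρ)^2 - β * (gfun β ρ)^2) /
      (β * (γ + (1 + gfun β ρ)^2)) := by
  obtain ⟨hp, he⟩ := gfun_spec hβ hρ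
  set g := gfun β ρ
  have hd : (0:ℝ) < γ + (1+g)^2 := by positivity
  rw [ffun]
  rw [div_eq_div_iff (by positivity) (by positivity)]
  field_simp
  linear_combination ((1+g)*(γ+(1+g)^2)) * he

lemma ffun_pos {γ β ρ : ℝ} (hγ : 0 < γ) (hβ : 0 < β) (hρ : 0 < ρ) :
    0 < ffun γ β ρ := by
  obtain ⟨hp, he⟩ := gfun_spec hβ hρ
  rw [ffun_eq hγ hβ hρ]
  set g := gfun β ρ
  have hbg : β * g < 1 + g := by nlinarith [mul_pos (mul_pos hρ hp) (by linarith : (0:ℝ) < 1+g)]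
  have : β * g^2 < (1+g)^2 := by nlinarith
  have h1 : 0 < γ * ((1+g)^2 - β*g^2) := by nlinarith
  positivity

/-- ψ(g₀) = 0 at ρ₀ = β/γ -/
lemma psi_g0 {γ β : ℝ} (hγ : 0 < γ) (hβ : 0 < β) :
    γ + γ * gfun β (β/γ) - β*γ*gfun β (β/γ) - β*gfun β (β/γ) - β*(gfun β (β/γ))^2 = 0 := by
  obtain ⟨hp, he⟩ := gfun_spec hβ (div_pos hβ hγ)
  set g₀ := gfun β (β/γ)
  have hγ' : γ ≠ 0 := hγ.ne'
  field_simp at he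
  linear_combination -he

/-- f strictly increasing for ρ < β/γ -/
lemma ffun_lt_left {γ β ρ₁ ρ₂ : ℝ} (hγ : 0 < γ) (hβ : 0 < β)
    (h1 : 0 < ρ₁) (h12 : ρ₁ < ρ₂) (h2 : ρ₂ < β/γ) :
    ffun γ β ρ₁ < ffun γ β ρ₂ := by
  have h2' : 0 < ρ₂ := h1.trans h12
  have hρ0 : 0 < β/γ := div_pos hβ hγ
  obtain ⟨hp1, he1⟩ := gfun_spec hβ h1
  obtain ⟨hp2, he2⟩ := gfun_spec hβ h2'
  obtain ⟨hp0, he0⟩ := gfun_spec hβ hρ0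
  have hψ0 := psi_g0 hγ hβ
  set g₀ := gfun β (β/γ)
  set g₁ := gfun β ρ₁
  set g₂ := gfun β ρ₂
  have h21 : g₂ < g₁ := gfun_lt hβ h1 h12
  have h02 : g₀ < g₂ := gfun_lt hβ h2' h2
  -- Ψ < 0
  have hkey : g₀ * (γ*(2+g₁+g₂) - β*γ*(g₁+g₂) - β*(g₁+g₂+2*g₁*g₂)) =
      -((g₂-g₀)*(β*g₀^2+γ) + (g₁-g₀)*(β*g₀^2+γ) + 2*β*g₀*(g₂-g₀)*(g₁-g₀))
      + (g₁+g₂)*(γ + γ*g₀ - β*γ*g₀ - β*g₀ - β*g₀^2) := by ring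
  have hΨ : γ*(2+g₁+g₂) - β*γ*(g₁+g₂) - β*(g₁+g₂+2*g₁*g₂) < 0 := by
    have h01 : g₀ < g₁ := h02.trans h21
    nlinarith [mul_pos (sub_pos.2 h02) (by positivity : (0:ℝ) < β*g₀^2+γ),
      mul_pos (sub_pos.2 h01) (by positivity : (0:ℝ) < β*g₀^2+γ),
      mul_pos (mul_pos (mul_pos hβ hp0) (sub_pos.2 h02)) (sub_pos.2 h01)]
  rw [ffun_eq hγ hβ h1, ffun_eq hγ hβ h2',
    div_lt_div_iff₀ (by positivity) (by positivity)]
  nlinarith [mul_pos (mul_pos hγ hβ) (mul_pos (sub_pos.2 h21) (neg_pos.2 hΨ))]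

/-- f strictly decreasing for ρ > β/γ -/
lemma ffun_lt_right {γ β ρ₁ ρ₂ : ℝ} (hγ : 0 < γ) (hβ : 0 < β)
    (h1 : β/γ < ρ₁) (h12 : ρ₁ < ρ₂) :
    ffun γ β ρ₂ < ffun γ β ρ₁ := by
  have hρ0 : 0 < β/γ := div_pos hβ hγ
  have h1' : 0 < ρ₁ := hρ0.trans h1
  have h2' : 0 < ρ₂ := h1'.trans h12
  obtain ⟨hp1, he1⟩ := gfun_spec hβ h1'
  obtain ⟨hp2, he2⟩ := gfun_spec hβ h2'
  obtain ⟨hp0, he0⟩ := gfun_spec hβ hρ0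
  have hψ0 := psi_g0 hγ hβ
  set g₀ := gfun β (β/γ)
  set g₁ := gfun β ρ₁
  set g₂ := gfun β ρ₂
  have h21 : g₂ < g₁ := gfun_lt hβ h1' h12
  have h10 : g₁ < g₀ := gfun_lt hβ hρ0 h1
  have h20 : g₂ < g₀ := h21.trans h10
  have hψ1 : 0 < γ + γ*g₁ - β*γ*g₁ - β*g₁ - β*g₁^2 := by
    have : g₀ * (γ + γ*g₁ - β*γ*g₁ - β*g₁ - β*g₁^2) =
        (g₀-g₁)*(γ+β*g₀*g₁) + g₁*(γ + γ*g₀ - β*γ*g₀ - β*g₀ - β*g₀^2) := by ring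
    nlinarith [mul_pos (sub_pos.2 h10) (by positivity : (0:ℝ) < γ+β*g₀*g₁)]
  have hψ2 : 0 < γ + γ*g₂ - β*γ*g₂ - β*g₂ - β*g₂^2 := by
    have : g₀ * (γ + γ*g₂ - β*γ*g₂ - β*g₂ - β*g₂^2) =
        (g₀-g₂)*(γ+β*g₀*g₂) + g₂*(γ + γ*g₀ - β*γ*g₀ - β*g₀ - β*g₀^2) := by ring
    nlinarith [mul_pos (sub_pos.2 h20) (by positivity : (0:ℝ) < γ+β*g₀*g₂)]
  have hΨ : 0 < γ*(2+g₁+g₂) - β*γ*(g₁+g₂) - β*(g₁+g₂+2*g₁*g₂) := by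
    nlinarith [sq_nonneg (g₁-g₂), hβ.le]
  rw [ffun_eq hγ hβ h1', ffun_eq hγ hβ h2',
    div_lt_div_iff₀ (by positivity) (by positivity)]
  nlinarith [mul_pos (mul_pos hγ hβ) (mul_pos (sub_pos.2 h21) hΨ)]

/-- Let L ≥ 1, β > 0, γ_1 ≥ … ≥ γ_L > 0, β_j ≥ 0, p_j ≥ 0 with
β_j·p_j > 0 for some j. Then R(ρ) := Σ_j β_j·log(1 + p_j·f(γ_j,β,ρ)) is strictly
increasing on (0, β/γ_1) and strictly decreasing on (β/γ_L, ∞). -/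
theorem sumRate_strictMono_strictAnti (L : ℕ) (hL : 1 ≤ L) (β : ℝ) (hβ : 0 < β)
    (γ : Fin L → ℝ) (hγpos : ∀ j, 0 < γ j)
    (hγsorted : ∀ i j : Fin L, i ≤ j → γ j ≤ γ i)
    (βv p : Fin L → ℝ) (hβv : ∀ j, 0 ≤ βv j) (hp : ∀ j, 0 ≤ p j)
    (hex : ∃ j, 0 < βv j * p j) :
    StrictMonoOn (fun ρ => ∑ j, βv j * Real.log (1 + p j * ffun (γ j) β ρ))
      (Set.Ioo 0 (β / γ ⟨0, hL⟩)) ∧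
    StrictAntiOn (fun ρ => ∑ j, βv j * Real.log (1 + p j * ffun (γ j) β ρ))
      (Set.Ioi (β / γ ⟨L - 1, by omega⟩)) := by
  obtain ⟨j0, hj0⟩ := hex
  have hβvp : 0 < βv j0 ∧ 0 < p j0 := by
    rcases mul_pos_iff.1 hj0 with h | h
    · exact h
    · exact absurd h.1 (not_lt.2 (hβv j0))
  constructor
  · intro ρ₁ h₁ ρ₂ h₂ h₁₂
    have hterm : ∀ j : Fin L, ffun (γ j) β ρ₁ < ffun (γ j) β ρ₂ := by
      intro j
      apply ffun_lt_left (hγpos j) hβ h₁.1 h₁₂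
      calc ρ₂ < β / γ ⟨0, hL⟩ := h₂.2
        _ ≤ β / γ j := by
          apply div_le_div_of_nonneg_left hβ.le (hγpos j)
          exact hγsorted ⟨0, hL⟩ j (by simp [Fin.le_def])
    apply Finset.sum_lt_sum
    · intro j _
      have hf1 : 0 < ffun (γ j) β ρ₁ := ffun_pos (hγpos j) hβ h₁.1
      apply mul_le_mul_of_nonneg_left _ (hβv j)
      apply Real.log_le_log (by nlinarith [mul_nonneg (hp j) hf1.le])
      nlinarith [(hterm j).le, hp j]
    · refine ⟨j0, Finset.mem_univ _, ?_⟩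
      have hf1 : 0 < ffun (γ j0) β ρ₁ := ffun_pos (hγpos j0) hβ h₁.1
      apply mul_lt_mul_of_pos_left _ hβvp.1
      apply Real.log_lt_log (by nlinarith [mul_nonneg (hp j0) hf1.le])
      nlinarith [hterm j0, hβvp.2]
  · intro ρ₁ h₁ ρ₂ h₂ h₁₂
    simp only [Set.mem_Ioi] at h₁ h₂
    have hterm : ∀ j : Fin L, ffun (γ j) β ρ₂ < ffun (γ j) β ρ₁ := by
      intro j
      apply ffun_lt_right (hγpos j) hβ _ h₁₂
      calc β / γ j ≤ β / γ ⟨L-1, by omega⟩ := by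
            apply div_le_div_of_nonneg_left hβ.le (hγpos ⟨L-1, by omega⟩)
            exact hγsorted j ⟨L-1, by omega⟩ (by simp [Fin.le_def]; omega)
        _ < ρ₁ := h₁
    have hρ₂pos : 0 < ρ₂ := by
      have := div_pos hβ (hγpos ⟨L-1, by omega⟩); linarith
    apply Finset.sum_lt_sum
    · intro j _
      have hf2 : 0 < ffun (γ j) β ρ₂ := ffun_pos (hγpos j) hβ hρ₂pos
      apply mul_le_mul_of_nonneg_left _ (hβv j)
      apply Real.log_le_log (by nlinarith [mul_nonneg (hp j) hf2.le])
      nlinarith [(hterm j).le, hp j]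
    · refine ⟨j0, Finset.mem_univ _, ?_⟩
      have hf2 : 0 < ffun (γ j0) β ρ₂ := ffun_pos (hγpos j0) hβ hρ₂pos
      apply mul_lt_mul_of_pos_left _ hβvp.1
      apply Real.log_lt_log (by nlinarith [mul_nonneg (hp j0) hf2.le])
      nlinarith [hterm j0, hβvp.2]
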